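/- For the Fejér kernels of a bounded Vilenkin system, with q_A = M_{2A} + M_{2A-2} + ... + M_2 + M_0, if 0 ≤ k ≤ A−3 and k+2 ≤ s ≤ A−1, then for every x ∈ I_{2A} of the form x = (0,...,0, x_{2k} ≠ 0, 0,...,0, x_{2s} ≠ 0, x_{2s+1}, ..., x_{2A-1}, 0, 0, ...) one has q_{A-1} |K_{q_{A-1}}(x)| ≥ M_{2k} M_{2s} / 4, where K_n = (1/n) Σ_{j=1}^{n} D_j is the nth Fejér kernel. -/

import Mathlib

noncomputable section
open MeasureTheory Finset Filter
open scoped ENNReal NNReal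

/-- M_0 = 1, M_{k+1} = m_k M_k, where the Vilenkin generating sequence is k ↦ m k + 2
(ensuring every term is at least 2). -/
def Mv (m : ℕ → ℕ) : ℕ → ℕ
  | 0 => 1
  | k + 1 => (m k + 2) * Mv m k

/-- k-th digit of n in the generalized number system. -/
def digit (m : ℕ → ℕ) (n k : ℕ) : ℕ := (n / Mv m k) % (m k + 2)

/-- The Vilenkin group: complete direct product of the cyclic groups Z_{m_k + 2}. -/
abbrev GV (m : ℕ → ℕ) : Type := ∀ k : ℕ, ZMod (m k + 2)

instance (n : ℕ) : TopologicalSpace (ZMod (n + 2)) := ⊥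
instance (n : ℕ) : DiscreteTopology (ZMod (n + 2)) := ⟨rfl⟩

instance (n : ℕ) : MeasurableSpace (ZMod (n + 2)) := ⊤
instance (n : ℕ) : BorelSpace (ZMod (n + 2)) := ⟨(borel_eq_top_of_discrete).symm⟩

/-- The normalized Haar measure on the Vilenkin group. -/
def haarG (m : ℕ → ℕ) : Measure (GV m) :=
  Measure.addHaarMeasure (⊤ : TopologicalSpace.PositiveCompacts (GV m))

/-- Generalized Rademacher function r_k(x) = exp(2πi x_k / m_k). -/
def rad (m : ℕ → ℕ) (k : ℕ) (x : GV m) : ℂ :=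
  Complex.exp (2 * Real.pi * Complex.I * ((x k).val : ℂ) / ((m k + 2 : ℕ) : ℂ))

/-- Vilenkin character ψ_n(x) = ∏_k r_k(x)^{n_k}. -/
def vilenkin (m : ℕ → ℕ) (n : ℕ) (x : GV m) : ℂ :=
  ∏ k ∈ Finset.range n, rad m k x ^ digit m n k

/-- Dirichlet kernel D_n = ∑_{k<n} ψ_k. -/
def DK (m : ℕ → ℕ) (n : ℕ) (x : GV m) : ℂ :=
  ∑ k ∈ Finset.range n, vilenkin m k x

/-- Fejér kernel K_n = (1/n) ∑_{j=1}^n D_j. -/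
def FK (m : ℕ → ℕ) (n : ℕ) (x : GV m) : ℂ :=
  (n : ℂ)⁻¹ * ∑ j ∈ Finset.range n, DK m (j + 1) x

/-- The interval I_n = {x : x_0 = ⋯ = x_{n-1} = 0}. -/
def Iset (m : ℕ → ℕ) (n : ℕ) : Set (GV m) := {x | ∀ k < n, x k = 0}

/-- q_A = M_{2A} + M_{2A-2} + ⋯ + M_2 + M_0. -/
def qA (m : ℕ → ℕ) (A : ℕ) : ℕ := ∑ j ∈ Finset.range (A + 1), Mv m (2 * j)

/-- Fourier coefficient with respect to the Vilenkin system. -/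
def fhat (m : ℕ → ℕ) (f : GV m → ℂ) (k : ℕ) : ℂ :=
  ∫ x, f x * (starRingEnd ℂ) (vilenkin m k x) ∂ haarG m

/-- Partial sums from a given sequence of Fourier coefficients. -/
def Sc (m : ℕ → ℕ) (c : ℕ → ℂ) (n : ℕ) (x : GV m) : ℂ :=
  ∑ v ∈ Finset.range n, c v * vilenkin m v x

/-- Fejér means from a given sequence of Fourier coefficients. -/
def σc (m : ℕ → ℕ) (c : ℕ → ℂ) (n : ℕ) (x : GV m) : ℂ :=
  (n : ℂ)⁻¹ * ∑ k ∈ Finset.range n, Sc m c k x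

/-- Partial sum operator S_n f for integrable f. -/
def Spart (m : ℕ → ℕ) (f : GV m → ℂ) (n : ℕ) (x : GV m) : ℂ :=
  Sc m (fhat m f) n x

/-- The filtration generated by the intervals I_n(x), i.e. by the first n coordinates. -/
def filtrationG (m : ℕ → ℕ) : Filtration ℕ (inferInstance : MeasurableSpace (GV m)) where
  seq n := MeasurableSpace.comap (fun x (k : Fin n) => x k) inferInstance
  mono' := by
    intro a b hab
    show MeasurableSpace.comap (fun (x : GV m) (k : Fin a) => x k) inferInstance ≤
      MeasurableSpace.comap (fun (x : GV m) (k : Fin b) => x k) inferInstance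
    have : (fun (x : GV m) (k : Fin a) => x k) =
        (fun (y : ∀ k : Fin b, ZMod (m k + 2)) (k : Fin a) => y (Fin.castLE hab k)) ∘
          (fun x (k : Fin b) => x k) := rfl
    rw [this, ← MeasurableSpace.comap_comp]
    exact MeasurableSpace.comap_mono
      ((measurable_pi_lambda _ fun k => measurable_pi_apply _).comap_le)
  le' := fun n => (measurable_pi_lambda _ fun k => measurable_pi_apply _).comap_le


/-- Membership in I_{2A}(0,…,0, x_{2k} ≠ 0, 0,…,0, x_{2s} ≠ 0, x_{2s+1}, …, x_{2A-1}):
the first 2A coordinates vanish except that the 2k-th and 2s-th are nonzero and the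
coordinates strictly between 2s and 2A are arbitrary. -/
def Ipat (m : ℕ → ℕ) (k s : ℕ) (x : GV m) : Prop :=
  (∀ j < 2 * k, x j = 0) ∧ x (2 * k) ≠ 0 ∧
    (∀ j, 2 * k < j → j < 2 * s → x j = 0) ∧ x (2 * s) ≠ 0

section BGGAux

variable (m : ℕ → ℕ)

lemma Mv_succ' (n : ℕ) : Mv m (n+1) = (m n + 2) * Mv m n := rfl

lemma Mv_pos (n : ℕ) : 0 < Mv m n := by
  induction n with
  | zero => simp [Mv]
  | succ n ih => rw [Mv_succ']; positivity

lemma Mv_dvd {j n : ℕ} (h : j ≤ n) : Mv m j ∣ Mv m n := by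
  induction n with
  | zero =>
    have : j = 0 := Nat.le_zero.mp h
    subst this; rfl
  | succ n ih =>
    rcases Nat.lt_or_ge j (n+1) with h' | h'
    · exact (ih (by omega)).trans (dvd_mul_left _ _)
    · have : j = n+1 := by omega
      subst this; rfl

lemma Mv_le {j n : ℕ} (h : j ≤ n) : Mv m j ≤ Mv m n :=
  Nat.le_of_dvd (Mv_pos m n) (Mv_dvd m h)

lemma two_mul_Mv_le (n : ℕ) : 2 * Mv m n ≤ Mv m (n+1) := by
  rw [Mv_succ']; exact Nat.mul_le_mul_right _ (by omega)

lemma four_mul_Mv_le (n : ℕ) : 4 * Mv m n ≤ Mv m (n+2) := by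
  have h1 := two_mul_Mv_le m n
  have h2 : 2 * Mv m (n+1) ≤ Mv m (n+2) := two_mul_Mv_le m (n+1)
  omega

lemma lt_Mv_self (n : ℕ) : n < Mv m n := by
  induction n with
  | zero => simp [Mv]
  | succ n ih =>
    have := two_mul_Mv_le m n
    omega

lemma digit_eq_zero {n k : ℕ} (h : n < Mv m k) : digit m n k = 0 := by
  unfold digit
  rw [Nat.div_eq_of_lt h, Nat.zero_mod]

lemma digit_eq_zero_of_le {n k : ℕ} (h : n ≤ k) : digit m n k = 0 :=
  digit_eq_zero m (lt_of_le_of_lt h (lt_Mv_self m k))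

lemma digit_add_eq {a r c : ℕ} (hd : Mv m c ∣ a) (hr : r < Mv m c) (j : ℕ) :
    digit m (a + r) j = digit m a j + digit m r j := by
  rcases Nat.lt_or_ge j c with hj | hj
  · obtain ⟨b, hb⟩ := (Mv_dvd m (show j+1 ≤ c by omega)).trans hd
    subst hb
    unfold digit
    rw [Mv_succ']
    rw [show (m j + 2) * Mv m j * b = Mv m j * ((m j + 2) * b) by ring]
    rw [Nat.mul_add_div (Mv_pos m j), Nat.mul_add_mod,
        Nat.mul_div_cancel_left _ (Mv_pos m j), Nat.mul_mod_right, Nat.zero_add]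
  · have hrj : r < Mv m j := lt_of_lt_of_le hr (Mv_le m hj)
    have h1 : digit m r j = 0 := digit_eq_zero m hrj
    rw [h1, Nat.add_zero]
    unfold digit
    congr 1
    have hmod : a % Mv m j + r < Mv m j := by
      have h2 : Mv m c ∣ a % Mv m j := (Nat.dvd_mod_iff (Mv_dvd m hj)).mpr hd
      have h3 : a % Mv m j < Mv m j := Nat.mod_lt _ (Mv_pos m j)
      obtain ⟨e, he⟩ := h2
      obtain ⟨f, hf⟩ := Mv_dvd m hj
      have hef : e < f := by
        by_contra hc
        push_neg at hc
        have : Mv m c * f ≤ Mv m c * e := Nat.mul_le_mul_left _ hc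
        omega
      have : Mv m c * (e + 1) ≤ Mv m c * f := Nat.mul_le_mul_left _ (by omega)
      have hcpos := Mv_pos m c
      nlinarith
    rw [Nat.add_div (Mv_pos m j), Nat.div_eq_of_lt hrj, Nat.mod_eq_of_lt hrj,
        if_neg (by omega)]
    omega

lemma digit_mul_Mv {c j0 : ℕ} (hc : c < m j0 + 2) (j : ℕ) :
    digit m (c * Mv m j0) j = if j = j0 then c else 0 := by
  rcases lt_trichotomy j j0 with hj | hj | hj
  · rw [if_neg hj.ne]
    obtain ⟨b, hb⟩ := Mv_dvd m (show j+1 ≤ j0 by omega)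
    unfold digit
    rw [hb, Mv_succ']
    rw [show c * ((m j + 2) * Mv m j * b) = Mv m j * ((m j + 2) * (c * b)) by ring]
    rw [Nat.mul_div_cancel_left _ (Mv_pos m j), Nat.mul_mod_right]
  · subst hj
    rw [if_pos rfl]
    unfold digit
    rw [Nat.mul_div_cancel _ (Mv_pos m j), Nat.mod_eq_of_lt hc]
  · rw [if_neg (by omega : j ≠ j0)]
    apply digit_eq_zero
    calc c * Mv m j0 < (m j0 + 2) * Mv m j0 := by
          have := Mv_pos m j0; exact Nat.mul_lt_mul_of_lt_of_le hc (le_refl _) this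
      _ = Mv m (j0+1) := (Mv_succ' m j0).symm
      _ ≤ Mv m j := Mv_le m hj

lemma rad_eq_exp (k : ℕ) (x : GV m) :
    rad m k x = Complex.exp ((2 * Real.pi * (x k).val / (m k + 2) : ℝ) * Complex.I) := by
  unfold rad
  congr 1
  push_cast
  ring

lemma norm_rad (k : ℕ) (x : GV m) : ‖rad m k x‖ = 1 := by
  rw [rad_eq_exp]
  exact Complex.norm_exp_ofReal_mul_I _

lemma rad_of_zero {k : ℕ} {x : GV m} (h : x k = 0) : rad m k x = 1 := by
  haveI : NeZero (m k + 2) := ⟨by omega⟩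
  unfold rad
  rw [h, ZMod.val_zero]
  simp

lemma rad_pow (k : ℕ) (x : GV m) : rad m k x ^ (m k + 2) = 1 := by
  rw [rad_eq_exp, ← Complex.exp_nat_mul]
  have h : ((m k + 2 : ℕ) : ℂ) * ((2 * Real.pi * (x k).val / (m k + 2) : ℝ) * Complex.I)
      = (((x k).val : ℤ) : ℂ) * (2 * Real.pi * Complex.I) := by
    have hμ : ((m k : ℂ) + 2) ≠ 0 := by
      have : ((m k + 2 : ℕ) : ℂ) ≠ 0 := Nat.cast_ne_zero.mpr (by omega)
      push_cast at this
      exact this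
    push_cast
    field_simp
  rw [h, Complex.exp_int_mul_two_pi_mul_I]

lemma rad_ne_one {k : ℕ} {x : GV m} (h : x k ≠ 0) : rad m k x ≠ 1 := by
  haveI : NeZero (m k + 2) := ⟨by omega⟩
  have hv : 0 < (x k).val := ZMod.val_pos.mpr h
  have hlt : (x k).val < m k + 2 := ZMod.val_lt _
  rw [rad_eq_exp]
  intro hone
  rw [Complex.exp_eq_one_iff] at hone
  obtain ⟨n, hn⟩ := hone
  have hI : (Complex.I : ℂ) ≠ 0 := Complex.I_ne_zero
  have h2 : ((2 * Real.pi * (x k).val / (m k + 2) : ℝ) : ℂ) = ((2 * Real.pi * n : ℝ) : ℂ) := by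
    apply mul_right_cancel₀ hI
    rw [hn]
    push_cast
    ring
  have h3 : (2 * Real.pi * (x k).val / (m k + 2) : ℝ) = 2 * Real.pi * n :=
    Complex.ofReal_inj.mp h2
  have hpi := Real.pi_pos
  have hμpos : (0:ℝ) < (m k : ℝ) + 2 := by positivity
  have hθpos : 0 < (2 * Real.pi * (x k).val / (m k + 2) : ℝ) := by
    apply div_pos _ hμpos
    have : (0:ℝ) < ((x k).val : ℝ) := by exact_mod_cast hv
    positivity
  have hθlt : (2 * Real.pi * (x k).val / (m k + 2) : ℝ) < 2 * Real.pi := by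
    rw [div_lt_iff₀ hμpos]
    have : ((x k).val : ℝ) < (m k : ℝ) + 2 := by exact_mod_cast hlt
    nlinarith
  rw [h3] at hθpos hθlt
  have hn0 : (0:ℝ) < (n:ℝ) := by nlinarith
  have hn1 : (n:ℝ) < 1 := by nlinarith
  have : (0:ℤ) < n := by exact_mod_cast hn0
  have : (n:ℤ) < 1 := by exact_mod_cast hn1
  omega

lemma vilenkin_eq_prod {n N : ℕ} (h : n ≤ N) (x : GV m) :
    vilenkin m n x = ∏ j ∈ Finset.range N, rad m j x ^ digit m n j := by
  unfold vilenkin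
  apply Finset.prod_subset (Finset.range_subset_range.mpr h)
  intro j hj hnj
  simp only [Finset.mem_range] at hj hnj
  rw [digit_eq_zero_of_le m (by omega), pow_zero]

lemma norm_vilenkin (n : ℕ) (x : GV m) : ‖vilenkin m n x‖ = 1 := by
  unfold vilenkin
  rw [norm_prod]
  apply Finset.prod_eq_one
  intro j _
  rw [norm_pow, norm_rad, one_pow]

lemma vilenkin_add {a r c : ℕ} (x : GV m) (hd : Mv m c ∣ a) (hr : r < Mv m c) :
    vilenkin m (a + r) x = vilenkin m a x * vilenkin m r x := by
  rw [vilenkin_eq_prod m (le_refl (a+r)) x, vilenkin_eq_prod m (show a ≤ a + r by omega) x,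
      vilenkin_eq_prod m (show r ≤ a + r by omega) x, ← Finset.prod_mul_distrib]
  apply Finset.prod_congr rfl
  intro j _
  rw [digit_add_eq m hd hr j, pow_add]

lemma vilenkin_mul_Mv {c j0 : ℕ} (x : GV m) (hc : c < m j0 + 2) :
    vilenkin m (c * Mv m j0) x = rad m j0 x ^ c := by
  rw [vilenkin_eq_prod m (le_max_left (c * Mv m j0) (j0+1)) x]
  rw [Finset.prod_eq_single_of_mem j0
      (Finset.mem_range.mpr (lt_of_lt_of_le (Nat.lt_succ_self j0) (le_max_right _ _)))]
  · rw [digit_mul_Mv m hc, if_pos rfl]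
  · intro b _ hb
    rw [digit_mul_Mv m hc, if_neg hb, pow_zero]

lemma vroot_geom_sum_zero {w : ℂ} {n : ℕ} (h1 : w ≠ 1) (hn : w ^ n = 1) :
    ∑ c ∈ Finset.range n, w ^ c = 0 := by
  rw [geom_sum_eq h1, hn, sub_self, zero_div]

lemma mul_sum_id_geom (w : ℂ) (n : ℕ) :
    (w - 1) * ∑ c ∈ Finset.range n, (c:ℂ) * w ^ c
      = ((n:ℂ) - 1) * w ^ n - (∑ c ∈ Finset.range n, w ^ c) + 1 := by
  induction n with
  | zero => simp
  | succ n ih =>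
    rw [Finset.sum_range_succ, Finset.sum_range_succ (f := fun c => w ^ c), mul_add, ih]
    push_cast
    ring

lemma sum_id_geom {w : ℂ} {n : ℕ} (h1 : w ≠ 1) (hn : w ^ n = 1) :
    (w - 1) * ∑ c ∈ Finset.range n, (c:ℂ) * w ^ c = (n:ℂ) := by
  rw [mul_sum_id_geom, hn, vroot_geom_sum_zero h1 hn]
  ring

lemma sum_blocks_mul {β : Type*} [AddCommMonoid β] (f : ℕ → β) (a b : ℕ) :
    ∑ r ∈ Finset.range (b * a), f r
      = ∑ c ∈ Finset.range b, ∑ u ∈ Finset.range a, f (c * a + u) := by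
  induction b with
  | zero => simp
  | succ b ih =>
    rw [Nat.succ_mul, Finset.sum_range_add, ih, Finset.sum_range_succ]

-- G-sum: sum of w^{digit a p} over a < Mv n vanishes for n > p
lemma sum_w_digit_eq_zero {x : GV m} {p : ℕ} (hx : x p ≠ 0) :
    ∀ n, p < n → ∑ a ∈ Finset.range (Mv m n), (rad m p x) ^ digit m a p = 0 := by
  intro n
  induction n with
  | zero => omega
  | succ n ih =>
    intro hn
    rw [Mv_succ' m n, sum_blocks_mul]
    rcases Nat.lt_or_ge p n with hpn | hpn
    · have hdig : ∀ c ∈ Finset.range (m n + 2), ∀ u ∈ Finset.range (Mv m n),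
          digit m (c * Mv m n + u) p = digit m u p := by
        intro c hc u hu
        simp only [Finset.mem_range] at hc hu
        rw [digit_add_eq m (dvd_mul_left _ _) hu p, digit_mul_Mv m hc p,
            if_neg (by omega), Nat.zero_add]
      calc ∑ c ∈ Finset.range (m n + 2), ∑ u ∈ Finset.range (Mv m n),
              rad m p x ^ digit m (c * Mv m n + u) p
          = ∑ c ∈ Finset.range (m n + 2), ∑ u ∈ Finset.range (Mv m n),
              rad m p x ^ digit m u p := by
            apply Finset.sum_congr rfl
            intro c hc
            exact Finset.sum_congr rfl (fun u hu => by rw [hdig c hc u hu])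
        _ = 0 := by
            rw [Finset.sum_congr rfl (fun c _ => ih hpn), Finset.sum_const, smul_zero]
    · have hp : p = n := by omega
      subst hp
      have hdig : ∀ c ∈ Finset.range (m p + 2), ∀ u ∈ Finset.range (Mv m p),
          digit m (c * Mv m p + u) p = c := by
        intro c hc u hu
        simp only [Finset.mem_range] at hc hu
        rw [digit_add_eq m (dvd_mul_left _ _) hu p, digit_mul_Mv m hc p,
            if_pos rfl, digit_eq_zero m hu]
        omega
      calc ∑ c ∈ Finset.range (m p + 2), ∑ u ∈ Finset.range (Mv m p),
              rad m p x ^ digit m (c * Mv m p + u) p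
          = ∑ c ∈ Finset.range (m p + 2), (Mv m p : ℂ) * rad m p x ^ c := by
            apply Finset.sum_congr rfl
            intro c hc
            rw [Finset.sum_congr rfl (fun u hu => by rw [hdig c hc u hu]),
                Finset.sum_const, Finset.card_range, nsmul_eq_mul]
        _ = (Mv m p : ℂ) * ∑ c ∈ Finset.range (m p + 2), rad m p x ^ c := by
            rw [Finset.mul_sum]
        _ = 0 := by
            rw [vroot_geom_sum_zero (rad_ne_one m hx) (rad_pow m p x), mul_zero]

-- H-sum
lemma sum_mul_w_digit {x : GV m} {p : ℕ} (hx : x p ≠ 0) :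
    ∀ n, p < n →
      (rad m p x - 1) * ∑ a ∈ Finset.range (Mv m n), (a:ℂ) * (rad m p x) ^ digit m a p
        = (Mv m n : ℂ) * (Mv m p : ℂ) := by
  intro n
  induction n with
  | zero => omega
  | succ n ih =>
    intro hn
    rw [Mv_succ' m n, sum_blocks_mul]
    rcases Nat.lt_or_ge p n with hpn | hpn
    · -- step case
      have key : ∀ c ∈ Finset.range (m n + 2),
          ∑ u ∈ Finset.range (Mv m n), ((c * Mv m n + u : ℕ):ℂ) * rad m p x ^ digit m (c * Mv m n + u) p
          = ∑ a ∈ Finset.range (Mv m n), (a:ℂ) * rad m p x ^ digit m a p := by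
        intro c hc
        simp only [Finset.mem_range] at hc
        have : ∀ u ∈ Finset.range (Mv m n),
            ((c * Mv m n + u : ℕ):ℂ) * rad m p x ^ digit m (c * Mv m n + u) p
            = ((c * Mv m n : ℕ):ℂ) * rad m p x ^ digit m u p + (u:ℂ) * rad m p x ^ digit m u p := by
          intro u hu
          simp only [Finset.mem_range] at hu
          rw [digit_add_eq m (dvd_mul_left _ _) hu p, digit_mul_Mv m hc p,
              if_neg (by omega), Nat.zero_add]
          push_cast
          ring
        rw [Finset.sum_congr rfl this, Finset.sum_add_distrib, ← Finset.mul_sum,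
            sum_w_digit_eq_zero m hx n hpn, mul_zero, zero_add]
      rw [Finset.sum_congr rfl key, Finset.sum_const, Finset.card_range, nsmul_eq_mul]
      have hih := ih hpn
      push_cast at hih ⊢
      linear_combination ((m n:ℂ) + 2) * hih
    · -- base case p = n
      have hp : p = n := by omega
      subst hp
      have key : ∀ c ∈ Finset.range (m p + 2),
          ∑ u ∈ Finset.range (Mv m p), ((c * Mv m p + u : ℕ):ℂ) * rad m p x ^ digit m (c * Mv m p + u) p
          = ((c:ℂ) * (Mv m p : ℂ)^2) * rad m p x ^ c
            + (∑ u ∈ Finset.range (Mv m p), (u:ℂ)) * rad m p x ^ c := by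
        intro c hc
        simp only [Finset.mem_range] at hc
        have : ∀ u ∈ Finset.range (Mv m p),
            ((c * Mv m p + u : ℕ):ℂ) * rad m p x ^ digit m (c * Mv m p + u) p
            = ((c * Mv m p : ℕ):ℂ) * rad m p x ^ c + (u:ℂ) * rad m p x ^ c := by
          intro u hu
          simp only [Finset.mem_range] at hu
          rw [digit_add_eq m (dvd_mul_left _ _) hu p, digit_mul_Mv m hc p,
              if_pos rfl, digit_eq_zero m hu, Nat.add_zero]
          push_cast
          ring
        rw [Finset.sum_congr rfl this, Finset.sum_add_distrib, Finset.sum_const,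
            Finset.card_range, nsmul_eq_mul, ← Finset.sum_mul]
        push_cast
        ring
      have hW1 := sum_id_geom (rad_ne_one m hx) (rad_pow m p x)
      have hW0 := vroot_geom_sum_zero (rad_ne_one m hx) (rad_pow m p x)
      rw [Finset.sum_congr rfl key, Finset.sum_add_distrib]
      have e1 : ∑ c ∈ Finset.range (m p + 2), (c:ℂ) * (Mv m p:ℂ)^2 * rad m p x ^ c
          = (Mv m p:ℂ)^2 * ∑ c ∈ Finset.range (m p + 2), (c:ℂ) * rad m p x ^ c := by
        rw [Finset.mul_sum]
        exact Finset.sum_congr rfl (fun c _ => by ring)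
      have e2 : ∑ c ∈ Finset.range (m p + 2),
            (∑ u ∈ Finset.range (Mv m p), (u:ℂ)) * rad m p x ^ c
          = (∑ u ∈ Finset.range (Mv m p), (u:ℂ))
              * ∑ c ∈ Finset.range (m p + 2), rad m p x ^ c := by
        rw [Finset.mul_sum]
      rw [e1, e2, hW0, mul_zero, add_zero]
      push_cast at hW1 ⊢
      linear_combination ((Mv m p:ℂ)^2) * hW1

-- evaluation of characters at our point
lemma vilenkin_eval {x : GV m} {k s : ℕ} (hks : k < s)
    (hx0 : ∀ j, j < 2*s → j ≠ 2*k → x j = 0)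
    {r : ℕ} (hr : r < Mv m (2*s+1)) :
    vilenkin m r x = rad m (2*k) x ^ digit m r (2*k) * rad m (2*s) x ^ digit m r (2*s) := by
  rw [vilenkin_eq_prod m (le_max_left r (2*s+2)) x]
  rw [← Finset.prod_subset
      (show ({2*k, 2*s} : Finset ℕ) ⊆ Finset.range (max r (2*s+2)) by
        intro j hj
        simp only [Finset.mem_insert, Finset.mem_singleton] at hj
        simp only [Finset.mem_range]
        rcases hj with h | h <;> subst h <;>
          exact lt_of_lt_of_le (by omega) (le_max_right _ _))
      (by
        intro j _ hj
        simp only [Finset.mem_insert, Finset.mem_singleton, not_or] at hj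
        obtain ⟨hj1, hj2⟩ := hj
        rcases Nat.lt_or_ge j (2*s) with h | h
        · rw [rad_of_zero m (hx0 j h hj1), one_pow]
        · have : r < Mv m j := lt_of_lt_of_le hr (Mv_le m (by omega))
          rw [digit_eq_zero m this, pow_zero])]
  rw [Finset.prod_pair (show 2*k ≠ 2*s by omega)]

lemma vilenkin_eval_mid {x : GV m} {k s t : ℕ} (hks : k < s)
    (hx0 : ∀ j, j < 2*s → j ≠ 2*k → x j = 0)
    (hts : t ≤ s) {r : ℕ} (hr : r < Mv m (2*t)) :
    vilenkin m r x = rad m (2*k) x ^ digit m r (2*k) := by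
  have hr' : r < Mv m (2*s+1) := lt_of_lt_of_le hr (Mv_le m (by omega))
  rw [vilenkin_eval m hks hx0 hr',
      digit_eq_zero m (lt_of_lt_of_le hr (Mv_le m (by omega : 2*t ≤ 2*s))), pow_zero, mul_one]

-- middle blocks: exact value
lemma inner_mid {x : GV m} {k s t : ℕ} (hks : k < s)
    (hx0 : ∀ j, j < 2*s → j ≠ 2*k → x j = 0) (hxk : x (2*k) ≠ 0)
    (hkt : k < t) (hts : t ≤ s) (C : ℂ) :
    ∑ r ∈ Finset.range (Mv m (2*t)), (C - r) * vilenkin m r x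
      = (Mv m (2*t) : ℂ) * (Mv m (2*k) : ℂ) / (1 - rad m (2*k) x) := by
  set w := rad m (2*k) x with hw
  have hw1 : w ≠ 1 := rad_ne_one m hxk
  have hw0 : w - 1 ≠ 0 := sub_ne_zero.mpr hw1
  have hG := sum_w_digit_eq_zero m hxk (2*t) (by omega)
  have hH := sum_mul_w_digit m hxk (2*t) (by omega)
  have e : ∀ r ∈ Finset.range (Mv m (2*t)),
      (C - r) * vilenkin m r x
        = C * w ^ digit m r (2*k) - (r:ℂ) * w ^ digit m r (2*k) := by
    intro r hr
    rw [vilenkin_eval_mid m hks hx0 hts (Finset.mem_range.mp hr)]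
    ring
  rw [Finset.sum_congr rfl e, Finset.sum_sub_distrib, ← Finset.mul_sum, hG, mul_zero,
      zero_sub]
  rw [eq_div_iff (show (1:ℂ) - w ≠ 0 by intro h; apply hw0; linear_combination -h)]
  linear_combination hH

-- high blocks: vanish
lemma inner_high {x : GV m} {k s t : ℕ} (hks : k < s)
    (hx0 : ∀ j, j < 2*s → j ≠ 2*k → x j = 0) (hxk : x (2*k) ≠ 0) (hxs : x (2*s) ≠ 0)
    (hst : s < t) (C : ℂ) :
    ∑ r ∈ Finset.range (Mv m (2*t)), (C - r) * vilenkin m r x = 0 := by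
  set w := rad m (2*k) x with hw
  set z := rad m (2*s) x with hz
  have hz1 : z ≠ 1 := rad_ne_one m hxs
  -- key: any block of length Mv m (2s+1) vanishes
  have inner0 : ∀ C' : ℂ,
      ∑ u ∈ Finset.range (Mv m (2*s+1)), (C' - u) * vilenkin m u x = 0 := by
    intro C'
    have hG := sum_w_digit_eq_zero m hxk (2*s) (by omega)
    have hH0 : ∀ c ∈ Finset.range (m (2*s) + 2),
        ∑ a ∈ Finset.range (Mv m (2*s)),
          ((C' - (c * Mv m (2*s) + a : ℕ)) * vilenkin m (c * Mv m (2*s) + a) x)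
        = z ^ c * (0 - ∑ a ∈ Finset.range (Mv m (2*s)), (a:ℂ) * w ^ digit m a (2*k)
            + (C' - (c * Mv m (2*s) : ℕ)) * 0) := by
      intro c hc
      simp only [Finset.mem_range] at hc
      have e : ∀ a ∈ Finset.range (Mv m (2*s)),
          (C' - ((c * Mv m (2*s) + a : ℕ):ℂ)) * vilenkin m (c * Mv m (2*s) + a) x
          = z ^ c * ((C' - (c * Mv m (2*s) : ℕ)) * w ^ digit m a (2*k)
              - (a:ℂ) * w ^ digit m a (2*k)) := by
        intro a ha
        simp only [Finset.mem_range] at ha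
        rw [vilenkin_add m x (dvd_mul_left (Mv m (2*s)) c) ha,
            vilenkin_mul_Mv m x hc,
            vilenkin_eval_mid m hks hx0 (le_refl s) ha]
        push_cast
        ring
      rw [Finset.sum_congr rfl e, ← Finset.mul_sum, Finset.sum_sub_distrib,
          ← Finset.mul_sum, hG, mul_zero, zero_sub]
      ring
    rw [show Mv m (2*s+1) = (m (2*s) + 2) * Mv m (2*s) from Mv_succ' m (2*s),
        sum_blocks_mul]
    rw [Finset.sum_congr rfl (fun c hc => hH0 c hc)]
    have : ∀ c ∈ Finset.range (m (2*s) + 2),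
        z ^ c * (0 - ∑ a ∈ Finset.range (Mv m (2*s)), (a:ℂ) * w ^ digit m a (2*k)
            + (C' - (c * Mv m (2*s) : ℕ)) * 0)
        = (0 - ∑ a ∈ Finset.range (Mv m (2*s)), (a:ℂ) * w ^ digit m a (2*k)) * z ^ c := by
      intro c _; ring
    rw [Finset.sum_congr rfl this, ← Finset.mul_sum,
        vroot_geom_sum_zero hz1 (rad_pow m (2*s) x), mul_zero]
  -- now decompose range (Mv m (2t)) into blocks of size Mv m (2s+1)
  obtain ⟨D, hD⟩ : Mv m (2*s+1) ∣ Mv m (2*t) := Mv_dvd m (by omega)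
  rw [hD, mul_comm, sum_blocks_mul]
  have e : ∀ c ∈ Finset.range D,
      ∑ u ∈ Finset.range (Mv m (2*s+1)),
        (C - ((c * Mv m (2*s+1) + u : ℕ):ℂ)) * vilenkin m (c * Mv m (2*s+1) + u) x
      = vilenkin m (c * Mv m (2*s+1)) x *
          ∑ u ∈ Finset.range (Mv m (2*s+1)),
            ((C - (c * Mv m (2*s+1) : ℕ)) - u) * vilenkin m u x := by
    intro c _
    rw [Finset.mul_sum]
    apply Finset.sum_congr rfl
    intro u hu
    simp only [Finset.mem_range] at hu
    rw [vilenkin_add m x (dvd_mul_left (Mv m (2*s+1)) c) hu]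
    push_cast
    ring
  rw [Finset.sum_congr rfl e]
  rw [Finset.sum_congr rfl (fun c _ => by rw [inner0 (C - ((c * Mv m (2*s+1) : ℕ):ℂ)), mul_zero])]
  exact Finset.sum_const_zero

-- block decomposition of range (q) with descending blocks
lemma sum_blocks_desc (f : ℕ → ℂ) :
    ∀ B, ∑ v ∈ Finset.range (∑ j ∈ Finset.range B, Mv m (2*j)), f v
      = ∑ t ∈ Finset.range B, ∑ r ∈ Finset.range (Mv m (2*t)),
          f ((∑ j ∈ Finset.Ico (t+1) B, Mv m (2*j)) + r) := by
  intro B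
  induction B generalizing f with
  | zero => simp
  | succ B ih =>
    rw [Finset.sum_range_succ (f := fun j => Mv m (2*j)), add_comm, Finset.sum_range_add,
        ih (fun v => f (Mv m (2*B) + v))]
    rw [Finset.sum_range_succ (f := fun t => ∑ r ∈ Finset.range (Mv m (2*t)),
          f ((∑ j ∈ Finset.Ico (t+1) (B+1), Mv m (2*j)) + r))]
    rw [add_comm]
    congr 1
    · apply Finset.sum_congr rfl
      intro t ht
      simp only [Finset.mem_range] at ht
      apply Finset.sum_congr rfl
      intro r _
      congr 1
      rw [Finset.sum_Ico_succ_top (by omega : t+1 ≤ B)]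
      omega
    · simp

-- sum of Dirichlet kernels
lemma sum_DK_eq (x : GV m) (n : ℕ) :
    ∑ j ∈ Finset.range n, DK m (j+1) x
      = ∑ v ∈ Finset.range n, ((n:ℂ) - v) * vilenkin m v x := by
  induction n with
  | zero => simp
  | succ n ih =>
    rw [Finset.sum_range_succ, ih]
    have h1 : (DK m (n+1) x) = ∑ v ∈ Finset.range (n+1), vilenkin m v x := rfl
    rw [h1]
    push_cast
    rw [Finset.sum_range_succ (f := fun v => ((n:ℂ) + 1 - v) * vilenkin m v x),
        Finset.sum_range_succ (f := fun v => vilenkin m v x)]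
    have e : ∑ v ∈ Finset.range n, ((n:ℂ) + 1 - v) * vilenkin m v x
        = ∑ v ∈ Finset.range n, (((n:ℂ) - v) * vilenkin m v x + vilenkin m v x) :=
      Finset.sum_congr rfl (fun v _ => by ring)
    rw [e, Finset.sum_add_distrib]
    ring

-- numeric lemmas
lemma qA_le_Mv (t : ℕ) : 3 * qA m t ≤ 4 * Mv m (2*t) := by
  induction t with
  | zero => simp [qA, Mv]
  | succ t ih =>
    have h1 : qA m (t+1) = qA m t + Mv m (2*(t+1)) := by
      unfold qA
      rw [Finset.sum_range_succ]
    have h2 : 4 * Mv m (2*t) ≤ Mv m (2*t+2) := four_mul_Mv_le m (2*t)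
    have h3 : Mv m (2*(t+1)) = Mv m (2*t+2) := by ring_nf
    omega

lemma Mv_le_qA (t : ℕ) : Mv m (2*t) ≤ qA m t := by
  unfold qA
  exact Finset.single_le_sum (f := fun j => Mv m (2*j)) (fun j _ => Nat.zero_le _)
    (Finset.self_mem_range_succ t)

lemma sum_sq_Mv_le (k : ℕ) :
    15 * ∑ t ∈ Finset.range (k+1), Mv m (2*t)^2 ≤ 16 * Mv m (2*k)^2 := by
  induction k with
  | zero => simp [Mv]
  | succ k ih =>
    rw [Finset.sum_range_succ]
    have h2 : 4 * Mv m (2*k) ≤ Mv m (2*k+2) := four_mul_Mv_le m (2*k)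
    have h3 : Mv m (2*(k+1)) = Mv m (2*k+2) := by ring_nf
    have h4 : (4 * Mv m (2*k))^2 ≤ Mv m (2*k+2)^2 := Nat.pow_le_pow_left h2 2
    have h5 : 16 * Mv m (2*k)^2 ≤ Mv m (2*k+2)^2 := by nlinarith
    rw [h3]
    nlinarith

lemma nat_bound (t : ℕ) (ht : 1 ≤ t) : 12 * qA m t + 6 ≤ 19 * Mv m (2*t) := by
  have h1 := qA_le_Mv m t
  have h2 : Mv m 2 ≤ Mv m (2*t) := Mv_le m (by omega)
  have h3 : 4 ≤ Mv m 2 := by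
    have : Mv m 2 = (m 1 + 2) * ((m 0 + 2) * 1) := rfl
    nlinarith
  omega

-- norm bound for low blocks
lemma norm_inner_low {x : GV m} {k s t : ℕ} (hks : k < s)
    (hx0 : ∀ j, j < 2*s → j ≠ 2*k → x j = 0)
    (htk : t ≤ k) :
    ‖∑ r ∈ Finset.range (Mv m (2*t)), ((qA m t : ℂ) - r) * vilenkin m r x‖
      ≤ 13/12 * (Mv m (2*t) : ℝ)^2 := by
  have hpsi : ∀ r ∈ Finset.range (Mv m (2*t)), vilenkin m r x = 1 := by
    intro r hr
    simp only [Finset.mem_range] at hr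
    rw [vilenkin_eval_mid m hks hx0 (by omega : t ≤ s) hr,
        digit_eq_zero m (lt_of_lt_of_le hr (Mv_le m (by omega : 2*t ≤ 2*k))), pow_zero]
  have e : ∀ r ∈ Finset.range (Mv m (2*t)),
      ((qA m t : ℂ) - r) * vilenkin m r x = (((qA m t : ℝ) - r : ℝ) : ℂ) := by
    intro r hr
    rw [hpsi r hr, mul_one]
    push_cast
    ring
  rw [Finset.sum_congr rfl e]
  have habs : ‖∑ r ∈ Finset.range (Mv m (2*t)), (((qA m t : ℝ) - r : ℝ) : ℂ)‖
      = |∑ r ∈ Finset.range (Mv m (2*t)), ((qA m t : ℝ) - r)| := by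
    rw [← Complex.ofReal_sum]
    exact (Complex.norm_real _).trans (Real.norm_eq_abs _)
  rw [habs]
  set Mt := Mv m (2*t) with hMt
  have hsum : ∑ r ∈ Finset.range Mt, ((qA m t : ℝ) - r)
      = Mt * (qA m t : ℝ) - (Mt * (Mt - 1) : ℕ)/2 := by
    rw [Finset.sum_sub_distrib, Finset.sum_const, Finset.card_range, nsmul_eq_mul]
    have : ∑ r ∈ Finset.range Mt, (r:ℝ) = ((Mt * (Mt-1) : ℕ) : ℝ)/2 := by
      rw [← Finset.sum_range_id_mul_two Mt]
      push_cast
      ring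
    rw [this]
  rw [hsum]
  have hq := Mv_le_qA m t
  have hMpos := Mv_pos m (2*t)
  have hval : (0:ℝ) ≤ Mt * (qA m t : ℝ) - (Mt * (Mt - 1) : ℕ)/2 := by
    have h1 : (Mt * (Mt - 1) : ℕ) ≤ Mt * qA m t := by
      apply Nat.mul_le_mul_left
      omega
    have h2 : ((Mt * (Mt-1) : ℕ):ℝ) ≤ (Mt:ℝ) * qA m t := by exact_mod_cast h1
    linarith
  rw [abs_of_nonneg hval]
  rcases Nat.eq_zero_or_pos t with ht0 | ht0
  · subst ht0
    have hM1 : Mt = 1 := rfl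
    have hq1 : qA m 0 = 1 := by simp [qA, Mv]
    rw [hq1, hM1]
    norm_num
  · have hb := nat_bound m t ht0
    have hb' : 12 * (qA m t : ℝ) + 6 ≤ 19 * (Mt:ℝ) := by exact_mod_cast hb
    have hM1 : (1:ℝ) ≤ (Mt:ℝ) := by exact_mod_cast hMpos
    have hcast : ((Mt * (Mt - 1) : ℕ):ℝ) = (Mt:ℝ) * ((Mt:ℝ) - 1) := by
      have : (Mt:ℝ) - 1 = ((Mt - 1 : ℕ):ℝ) := by
        rw [Nat.cast_sub (by omega)]
        norm_num
      rw [this]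
      push_cast
      ring
    rw [hcast]
    nlinarith

end BGGAux

/-- Lemma (BGG): for x of the indicated form, q_{A-1}|K_{q_{A-1}}(x)| ≥ M_{2k}M_{2s}/4. -/
theorem fejer_kernel_lower_bound (m : ℕ → ℕ) (M : ℕ)
    (hM : ∀ j, m j + 2 ≤ M) (hM' : ∃ j, m j + 2 = M)
    (A k s : ℕ) (hA : 2 < A) (hk : k ≤ A - 3) (hks : k + 2 ≤ s) (hs : s ≤ A - 1)
    (x : GV m) (hx : Ipat m k s x) :
    ((Mv m (2 * k) : ℝ) * (Mv m (2 * s) : ℝ)) / 4 ≤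
      (qA m (A - 1) : ℝ) * ‖FK m (qA m (A - 1)) x‖ := by
  obtain ⟨hx1, hxk, hx2, hxs⟩ := hx
  have hx0 : ∀ j, j < 2*s → j ≠ 2*k → x j = 0 := by
    intro j hj hjk
    rcases Nat.lt_trichotomy j (2*k) with h | h | h
    · exact hx1 j h
    · exact absurd h hjk
    · exact hx2 j h hj
  have hkslt : k < s := by omega
  have hsA : s + 1 ≤ A := by omega
  have hw1 : rad m (2*k) x ≠ 1 := rad_ne_one m hxk
  have hq'' : qA m (A-1) = ∑ j ∈ Finset.range A, Mv m (2*j) := by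
    unfold qA
    rw [show A - 1 + 1 = A by omega]
  set q := qA m (A-1) with hqdef
  have hqpos : 0 < q := by
    rw [hq'']
    apply Finset.sum_pos (fun j _ => Mv_pos m _)
    exact ⟨0, Finset.mem_range.mpr (by omega)⟩
  have hFK : (q : ℝ) * ‖FK m q x‖
      = ‖∑ v ∈ Finset.range q, ((q:ℂ) - v) * vilenkin m v x‖ := by
    rw [← sum_DK_eq m x q]
    have h1 : ∑ j ∈ Finset.range q, DK m (j+1) x = (q:ℂ) * FK m q x := by
      unfold FK
      rw [← mul_assoc, mul_inv_cancel₀ (Nat.cast_ne_zero.mpr hqpos.ne'), one_mul]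
    rw [h1, norm_mul, Complex.norm_natCast]
  rw [hFK]
  have hblocks : ∑ v ∈ Finset.range q, ((q:ℂ) - v) * vilenkin m v x
      = ∑ t ∈ Finset.range A, vilenkin m (∑ j ∈ Finset.Ico (t+1) A, Mv m (2*j)) x * (∑ r ∈ Finset.range (Mv m (2*t)), (((q:ℂ) - ((∑ j ∈ Finset.Ico (t+1) A, Mv m (2*j)) : ℕ)) - (r:ℂ)) * vilenkin m r x) := by
    rw [show Finset.range q = Finset.range (∑ j ∈ Finset.range A, Mv m (2*j)) by rw [hq'']]
    rw [sum_blocks_desc m (fun v => ((q:ℂ) - v) * vilenkin m v x) A]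
    apply Finset.sum_congr rfl
    intro t ht
    simp only [Finset.mem_range] at ht
    rw [Finset.mul_sum]
    apply Finset.sum_congr rfl
    intro r hr
    simp only [Finset.mem_range] at hr
    have hdvd : Mv m (2*t+2) ∣ (∑ j ∈ Finset.Ico (t+1) A, Mv m (2*j)) := by
      apply Finset.dvd_sum
      intro j hj
      simp only [Finset.mem_Ico] at hj
      exact Mv_dvd m (by omega)
    have hrlt : r < Mv m (2*t+2) := lt_of_lt_of_le hr (Mv_le m (by omega))
    rw [vilenkin_add m x hdvd hrlt]
    push_cast
    ring
  have hdrop : ∑ t ∈ Finset.range A, vilenkin m (∑ j ∈ Finset.Ico (t+1) A, Mv m (2*j)) x * (∑ r ∈ Finset.range (Mv m (2*t)), (((q:ℂ) - ((∑ j ∈ Finset.Ico (t+1) A, Mv m (2*j)) : ℕ)) - (r:ℂ)) * vilenkin m r x) = ∑ t ∈ Finset.range (s+1), vilenkin m (∑ j ∈ Finset.Ico (t+1) A, Mv m (2*j)) x * (∑ r ∈ Finset.range (Mv m (2*t)), (((q:ℂ) - ((∑ j ∈ Finset.Ico (t+1) A, Mv m (2*j)) : ℕ)) - (r:ℂ))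 * vilenkin m r x) := by
    symm
    apply Finset.sum_subset (Finset.range_subset_range.mpr hsA)
    intro t htA hts
    simp only [Finset.mem_range] at htA hts
    rw [inner_high m hkslt hx0 hxk hxs (by omega) _, mul_zero]
  have hsplitrange : ∑ t ∈ Finset.range (s+1), vilenkin m (∑ j ∈ Finset.Ico (t+1) A, Mv m (2*j)) x * (∑ r ∈ Finset.range (Mv m (2*t)), (((q:ℂ) - ((∑ j ∈ Finset.Ico (t+1) A, Mv m (2*j)) : ℕ)) - (r:ℂ)) * vilenkin m r x)
      = (∑ t ∈ Finset.range (k+1), vilenkin m (∑ j ∈ Finset.Ico (t+1) A, Mv m (2*j)) x * (∑ r ∈ Finset.range (Mv m (2*t)), (((q:ℂ) - ((∑ j ∈ Finset.Ico (t+1) A, Mv m (2*j)) : ℕ)) - (r:ℂ)) * vilenkin m r x)) + ∑ t ∈ Finset.Ico (k+1) (s+1), vilenkin m (∑ j ∈ Finset.Ico (t+1) A, Mv m (2*j)) x * (∑ r ∈ Finset.range (Mv m (2*t)), (((q:ℂ) - ((∑ j ∈ Finset.Ico (t+1) A, Mv m (2*j)) : ℕ)) - (r:ℂ)) * vilenkin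 m r x) := by
    rw [Finset.range_eq_Ico,
        ← Finset.sum_Ico_consecutive _ (Nat.zero_le (k+1)) (show k+1 ≤ s+1 by omega),
        ← Finset.range_eq_Ico]
  have hCt : ∀ t, t < A → (q:ℂ) - ((∑ j ∈ Finset.Ico (t+1) A, Mv m (2*j)) : ℕ) = (qA m t : ℂ) := by
    intro t htA
    have h1 : qA m t + (∑ j ∈ Finset.Ico (t+1) A, Mv m (2*j)) = q := by
      rw [hq'']
      show (∑ j ∈ Finset.range (t+1), Mv m (2*j)) + (∑ j ∈ Finset.Ico (t+1) A, Mv m (2*j)) = _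
      rw [Finset.range_eq_Ico, Finset.range_eq_Ico]
      exact Finset.sum_Ico_consecutive _ (Nat.zero_le _) (by omega)
    have h2 := congrArg (fun z : ℕ => (z:ℂ)) h1
    push_cast at h2 ⊢
    linear_combination -h2
  have hmid : ∑ t ∈ Finset.Ico (k+1) (s+1), vilenkin m (∑ j ∈ Finset.Ico (t+1) A, Mv m (2*j)) x * (∑ r ∈ Finset.range (Mv m (2*t)), (((q:ℂ) - ((∑ j ∈ Finset.Ico (t+1) A, Mv m (2*j)) : ℕ)) - (r:ℂ)) * vilenkin m r x)
      = ((Mv m (2*k):ℂ)/(1 - rad m (2*k) x)) *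
          ∑ t ∈ Finset.Ico (k+1) (s+1), vilenkin m (∑ j ∈ Finset.Ico (t+1) A, Mv m (2*j)) x * (Mv m (2*t):ℂ) := by
    rw [Finset.mul_sum]
    apply Finset.sum_congr rfl
    intro t ht
    simp only [Finset.mem_Ico] at ht
    rw [inner_mid m hkslt hx0 hxk (by omega) (by omega) _]
    ring
  rw [hblocks, hdrop, hsplitrange, hmid]
  -- bound the low part
  have hlow : ‖∑ t ∈ Finset.range (k+1), vilenkin m (∑ j ∈ Finset.Ico (t+1) A, Mv m (2*j)) x * (∑ r ∈ Finset.range (Mv m (2*t)), (((q:ℂ) - ((∑ j ∈ Finset.Ico (t+1) A, Mv m (2*j)) : ℕ)) - (r:ℂ)) * vilenkin m r x)‖ ≤ 52/45 * (Mv m (2*k):ℝ)^2 := by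
    calc ‖∑ t ∈ Finset.range (k+1), vilenkin m (∑ j ∈ Finset.Ico (t+1) A, Mv m (2*j)) x * (∑ r ∈ Finset.range (Mv m (2*t)), (((q:ℂ) - ((∑ j ∈ Finset.Ico (t+1) A, Mv m (2*j)) : ℕ)) - (r:ℂ)) * vilenkin m r x)‖
        ≤ ∑ t ∈ Finset.range (k+1), ‖vilenkin m (∑ j ∈ Finset.Ico (t+1) A, Mv m (2*j)) x * (∑ r ∈ Finset.range (Mv m (2*t)), (((q:ℂ) - ((∑ j ∈ Finset.Ico (t+1) A, Mv m (2*j)) : ℕ)) - (r:ℂ)) * vilenkin m r x)‖ := norm_sum_le _ _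
      _ ≤ ∑ t ∈ Finset.range (k+1), 13/12 * (Mv m (2*t):ℝ)^2 := by
          apply Finset.sum_le_sum
          intro t ht
          simp only [Finset.mem_range] at ht
          rw [norm_mul, norm_vilenkin, one_mul, hCt t (by omega)]
          exact norm_inner_low m hkslt hx0 (by omega)
      _ ≤ 52/45 * (Mv m (2*k):ℝ)^2 := by
          have h := sum_sq_Mv_le m k
          have h' : (15:ℝ) * ∑ t ∈ Finset.range (k+1), (Mv m (2*t):ℝ)^2
              ≤ 16 * (Mv m (2*k):ℝ)^2 := by exact_mod_cast h
          have e : ∑ t ∈ Finset.range (k+1), 13/12 * (Mv m (2*t):ℝ)^2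
              = 13/12 * ∑ t ∈ Finset.range (k+1), (Mv m (2*t):ℝ)^2 := by
            rw [Finset.mul_sum]
          rw [e]
          linarith
  -- bound the middle part from below
  have hTnorm : (2:ℝ)/3 * (Mv m (2*s):ℝ)
      ≤ ‖∑ t ∈ Finset.Ico (k+1) (s+1), vilenkin m (∑ j ∈ Finset.Ico (t+1) A, Mv m (2*j)) x * (Mv m (2*t):ℂ)‖ := by
    rw [Finset.sum_Ico_succ_top (show k+1 ≤ s by omega)]
    have h1 : ‖vilenkin m (∑ j ∈ Finset.Ico (s+1) A, Mv m (2*j)) x * (Mv m (2*s):ℂ)‖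
        = (Mv m (2*s):ℝ) := by
      rw [norm_mul, norm_vilenkin, one_mul, Complex.norm_natCast]
    have h2 : ‖∑ t ∈ Finset.Ico (k+1) s, vilenkin m (∑ j ∈ Finset.Ico (t+1) A, Mv m (2*j)) x * (Mv m (2*t):ℂ)‖
        ≤ 1/3 * (Mv m (2*s):ℝ) := by
      calc ‖∑ t ∈ Finset.Ico (k+1) s, vilenkin m (∑ j ∈ Finset.Ico (t+1) A, Mv m (2*j)) x * (Mv m (2*t):ℂ)‖
          ≤ ∑ t ∈ Finset.Ico (k+1) s, ‖vilenkin m (∑ j ∈ Finset.Ico (t+1) A, Mv m (2*j)) x * (Mv m (2*t):ℂ)‖ :=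
            norm_sum_le _ _
        _ = ∑ t ∈ Finset.Ico (k+1) s, (Mv m (2*t):ℝ) := by
            apply Finset.sum_congr rfl
            intro t _
            rw [norm_mul, norm_vilenkin, one_mul, Complex.norm_natCast]
        _ ≤ ∑ t ∈ Finset.range s, (Mv m (2*t):ℝ) := by
            apply Finset.sum_le_sum_of_subset_of_nonneg
            · rw [Finset.range_eq_Ico]
              exact Finset.Ico_subset_Ico (by omega) (le_refl s)
            · intro t _ _
              positivity
        _ ≤ 1/3 * (Mv m (2*s):ℝ) := by
            have hs1 : 1 ≤ s := by omega
            have e1 : qA m (s-1) = ∑ j ∈ Finset.range s, Mv m (2*j) := by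
              unfold qA
              rw [show s - 1 + 1 = s by omega]
            have e2 : 3 * qA m (s-1) ≤ 4 * Mv m (2*(s-1)) := qA_le_Mv m (s-1)
            have e3 : 4 * Mv m (2*(s-1)) ≤ Mv m (2*(s-1)+2) := four_mul_Mv_le m (2*(s-1))
            have e4 : Mv m (2*(s-1)+2) = Mv m (2*s) := by
              rw [show 2*(s-1)+2 = 2*s by omega]
            have e5 : 3 * (∑ j ∈ Finset.range s, Mv m (2*j)) ≤ Mv m (2*s) := by omega
            have e6 : (3:ℝ) * (∑ j ∈ Finset.range s, (Mv m (2*j):ℝ)) ≤ (Mv m (2*s):ℝ) := by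
              exact_mod_cast e5
            linarith
    have h3 := norm_sub_le
      ((∑ t ∈ Finset.Ico (k+1) s, vilenkin m (∑ j ∈ Finset.Ico (t+1) A, Mv m (2*j)) x * (Mv m (2*t):ℂ))
        + vilenkin m (∑ j ∈ Finset.Ico (s+1) A, Mv m (2*j)) x * (Mv m (2*s):ℂ))
      (∑ t ∈ Finset.Ico (k+1) s, vilenkin m (∑ j ∈ Finset.Ico (t+1) A, Mv m (2*j)) x * (Mv m (2*t):ℂ))
    rw [add_sub_cancel_left, h1] at h3
    linarith
  have hwnorm : ‖(1:ℂ) - rad m (2*k) x‖ ≤ 2 := by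
    calc ‖(1:ℂ) - rad m (2*k) x‖ ≤ ‖(1:ℂ)‖ + ‖rad m (2*k) x‖ := norm_sub_le _ _
      _ = 2 := by rw [norm_one, norm_rad]; norm_num
  have hwpos : 0 < ‖(1:ℂ) - rad m (2*k) x‖ := by
    rw [norm_pos_iff, sub_ne_zero]
    exact fun h => hw1 h.symm
  have hMkpos : (0:ℝ) < (Mv m (2*k):ℝ) := by exact_mod_cast Mv_pos m (2*k)
  have hcnorm : (Mv m (2*k):ℝ)/2 ≤ ‖(Mv m (2*k):ℂ)/(1 - rad m (2*k) x)‖ := by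
    rw [norm_div, Complex.norm_natCast]
    apply div_le_div_of_nonneg_left (le_of_lt hMkpos) hwpos hwnorm
  have h16 : (16:ℝ) * (Mv m (2*k):ℝ) ≤ (Mv m (2*s):ℝ) := by
    have e1 := four_mul_Mv_le m (2*k)
    have e2 := four_mul_Mv_le m (2*k+2)
    have e3 : Mv m (2*k+2+2) ≤ Mv m (2*s) := Mv_le m (by omega)
    have e4 : 16 * Mv m (2*k) ≤ Mv m (2*s) := by omega
    exact_mod_cast e4
  -- final combination
  set L := ∑ t ∈ Finset.range (k+1), vilenkin m (∑ j ∈ Finset.Ico (t+1) A, Mv m (2*j)) x * (∑ r ∈ Finset.range (Mv m (2*t)), (((q:ℂ) - ((∑ j ∈ Finset.Ico (t+1) A, Mv m (2*j)) : ℕ)) - (r:ℂ)) * vilenkin m r x) with hL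
  set c := (Mv m (2*k):ℂ)/(1 - rad m (2*k) x) with hc
  set T := ∑ t ∈ Finset.Ico (k+1) (s+1), vilenkin m (∑ j ∈ Finset.Ico (t+1) A, Mv m (2*j)) x * (Mv m (2*t):ℂ) with hT
  have h5 : ‖c * T‖ ≤ ‖L + c * T‖ + ‖L‖ := by
    have := norm_sub_le (L + c * T) L
    rw [add_sub_cancel_left] at this
    exact this
  have h6 : ‖c * T‖ = ‖c‖ * ‖T‖ := norm_mul _ _
  have h7 : (Mv m (2*k):ℝ)/2 * ((2:ℝ)/3 * (Mv m (2*s):ℝ)) ≤ ‖c‖ * ‖T‖ :=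
    mul_le_mul hcnorm hTnorm (by positivity) (norm_nonneg c)
  have h8 := mul_le_mul_of_nonneg_left h16 (le_of_lt hMkpos)
  nlinarith [norm_nonneg L, norm_nonneg (L + c * T)]


end
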